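/- The structure ω₁ × ℚ with the lexicographic order is quasiminimal: every subset definable with parameters is countable or co-countable; but the associated closure operator cl_p, where cl_p(A) = { x : x does not realize the generic (co-countable) type over A }, does not satisfy the exchange property, hence is not a pregeometry. -/

import Mathlib

open FirstOrder Set

namespace QM

/-- Equality of quantifier-free types of two assignments (possibly in different structures). -/
def EqQF (L : FirstOrder.Language) {M N : Type*} [L.Structure M] [L.Structure N]
    {α : Type*} (a : α → M) (b : α → N) : Prop :=
  ∀ φ : L.Formula α, φ.IsQF → (φ.Realize a ↔ φ.Realize b)

/-- Equality of quantifier-free types over a parameter set `B`. -/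
def EqQFOver (L : FirstOrder.Language) {M : Type*} [L.Structure M] (B : Set M) {n : ℕ}
    (a b : Fin n → M) : Prop :=
  ∀ (m : ℕ) (c : Fin m → M), (∀ i, c i ∈ B) →
    EqQF L (Sum.elim a c) (Sum.elim b c)

/-- A pregeometry (combinatorial closure with exchange). -/
structure Pregeom (M : Type*) where
  cl : Set M → Set M
  subset_cl : ∀ A, A ⊆ cl A
  mono : ∀ ⦃A B : Set M⦄, A ⊆ B → cl A ⊆ cl B
  cl_idem : ∀ A, cl (cl A) = cl A
  finChar : ∀ (A : Set M) (x : M), x ∈ cl A → ∃ F : Finset M, ↑F ⊆ A ∧ x ∈ cl ↑F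
  exchange : ∀ (A : Set M) (a b : M), a ∈ cl (insert b A) → a ∉ cl A → b ∈ cl (insert a A)

variable (L : FirstOrder.Language) (M : Type*) [L.Structure M] (P : Pregeom M)

def Indep (P : Pregeom M) (S : Set M) : Prop := ∀ x ∈ S, x ∉ P.cl (S \ {x})

/-- QM1: the pregeometry is determined by the language. -/
def QM1 : Prop :=
  ∀ (n : ℕ) (a a' : M) (b b' : Fin n → M),
    EqQF L (Fin.cons a b) (Fin.cons a' b') →
    (a ∈ P.cl (Set.range b) ↔ a' ∈ P.cl (Set.range b'))

/-- QM2: infinite-dimensionality. -/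
def QM2 : Prop := ∀ F : Finset M, P.cl ↑F ≠ Set.univ

/-- QM3: countable closure property. -/
def QM3 : Prop := ∀ F : Finset M, (P.cl ↑F).Countable

/-- QM4: uniqueness of the generic type. -/
def QM4 : Prop :=
  ∀ (ι : Type) [Countable ι] (h h' : ι → M),
    P.cl (Set.range h) = Set.range h → P.cl (Set.range h') = Set.range h' →
    EqQF L h h' →
    ∀ a a' : M, a ∉ Set.range h → a' ∉ Set.range h' →
      EqQF L (Sum.elim h fun _ : Unit => a) (Sum.elim h' fun _ : Unit => a')

/-- QM5: ℵ₀-homogeneity over countable closed sets and the empty set. -/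
def QM5 : Prop :=
  ∀ (ι : Type) [Countable ι] (h h' : ι → M) (n : ℕ) (b b' : Fin n → M),
    (P.cl (Set.range h) = Set.range h ∨ Set.range h = ∅) →
    (P.cl (Set.range h') = Set.range h' ∨ Set.range h' = ∅) →
    EqQF L (Sum.elim h b) (Sum.elim h' b') →
    ∀ a ∈ P.cl (Set.range h ∪ Set.range b),
      ∃ a' : M, EqQF L (Sum.elim (Sum.elim h b) fun _ : Unit => a)
        (Sum.elim (Sum.elim h' b') fun _ : Unit => a')

/-- A weakly quasiminimal pregeometry structure: QM1, QM3, QM4, QM5. -/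
structure IsWQPS : Prop where
  qm1 : QM1 L M P
  qm3 : QM3 M P
  qm4 : QM4 L M P
  qm5 : QM5 L M P

/-- A quasiminimal pregeometry structure: additionally QM2. -/
structure IsQPS extends IsWQPS L M P : Prop where
  qm2 : QM2 M P

/-- ℵ₀-homogeneity over the empty set. -/
def HomogEmpty : Prop :=
  ∀ (n m : ℕ) (b b' : Fin n → M), EqQF L b b' →
    ∀ a : Fin m → M, ∃ a' : Fin m → M, EqQF L (Sum.elim a b) (Sum.elim a' b')

/-- `tp(ā/B)` splits over `A`. -/
def SplitsOver (B A : Set M) {n : ℕ} (a : Fin n → M) : Prop :=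
  ∃ (m : ℕ) (c d : Fin m → M), (∀ i, c i ∈ B) ∧ (∀ i, d i ∈ B) ∧
    EqQFOver L A c d ∧ ¬ EqQFOver L (A ∪ Set.range a) c d

/-- `tp(b̄/B)` is s-isolated (for `b̄ ∈ cl B`). -/
def SIsolated (B : Set M) {n : ℕ} (b : Fin n → M) : Prop :=
  ∃ A₀ : Finset M, ↑A₀ ⊆ B ∧
    ∀ b' : Fin n → M, (∀ i, b' i ∈ P.cl B) →
      EqQFOver L (↑A₀ : Set M) b' b → EqQFOver L B b' b


/-- The solution set `φ(M, b̄)` of a formula with parameters `b̄`. -/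
def solSet (L : FirstOrder.Language) (M : Type*) [L.Structure M] {n : ℕ}
    (φ : L.Formula (Fin (n + 1))) (b : Fin n → M) : Set M :=
  {x : M | φ.Realize (Fin.cons x b)}

/-- `M` is quasiminimal: every definable subset (with parameters) is countable or
co-countable. -/
def Quasiminimal (L : FirstOrder.Language) (M : Type*) [L.Structure M] : Prop :=
  ∀ (n : ℕ) (φ : L.Formula (Fin (n + 1))) (b : Fin n → M),
    (solSet L M φ b).Countable ∨ (solSet L M φ b)ᶜ.Countable

/-- The quasiminimal closure: `x ∈ cl_p A` iff `x` does not realize the generic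
(co-countable) type over `A`, i.e. `x` satisfies some countable formula over `A`. -/
def clp (L : FirstOrder.Language) (M : Type*) [L.Structure M] (A : Set M) : Set M :=
  {x : M | ∃ (n : ℕ) (φ : L.Formula (Fin (n + 1))) (b : Fin n → M),
    (∀ i, b i ∈ A) ∧ (solSet L M φ b).Countable ∧ x ∈ solSet L M φ b}

/-- Equality of complete first-order types. -/
def EqFull (L : FirstOrder.Language) {M : Type*} [L.Structure M] {α : Type*}
    (a b : α → M) : Prop :=
  ∀ φ : L.Formula α, φ.Realize a ↔ φ.Realize b

/-- Quantifier elimination for types realized in `M`: quantifier-free types determine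
complete types. -/
def QEr (L : FirstOrder.Language) (M : Type*) [L.Structure M] : Prop :=
  ∀ (n : ℕ) (a b : Fin n → M), EqQF L a b → EqFull L a b

/-- The lexicographic order `ω₁ ×ₗ ℚ`. -/
abbrev OmegaOneQ : Type := ((Cardinal.aleph 1).ord.ToType) ×ₗ ℚ

noncomputable instance : FirstOrder.Language.order.Structure OmegaOneQ :=
  FirstOrder.Language.orderStructure OmegaOneQ


/-! ### Auxiliary material for statement 14 -/

section Aux

abbrev Om : Type := (Cardinal.aleph 1).ord.ToType

instance : NoMaxOrder Om := Cardinal.noMaxOrder (Cardinal.aleph0_le_aleph 1)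

instance : Nonempty Om :=
  Ordinal.toType_nonempty_iff_ne_zero.2 (by
    rw [Ne, Cardinal.ord_eq_zero]
    exact (Cardinal.aleph_pos 1).ne')

instance : Nonempty OmegaOneQ := ⟨toLex (Classical.arbitrary Om, 0)⟩

lemma lex_lt_iff (a b : OmegaOneQ) :
    a < b ↔ (ofLex a).1 < (ofLex b).1 ∨ ((ofLex a).1 = (ofLex b).1 ∧ (ofLex a).2 < (ofLex b).2) :=
  Prod.Lex.lt_iff

lemma lex_le_iff (a b : OmegaOneQ) :
    a ≤ b ↔ (ofLex a).1 < (ofLex b).1 ∨ ((ofLex a).1 = (ofLex b).1 ∧ (ofLex a).2 ≤ (ofLex b).2) :=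
  Prod.Lex.le_iff

instance : DenselyOrdered OmegaOneQ := by
  constructor
  intro a b hab
  rcases (lex_lt_iff a b).1 hab with h | ⟨h1, h2⟩
  · refine ⟨toLex ((ofLex a).1, (ofLex a).2 + 1), ?_, ?_⟩
    · exact (lex_lt_iff _ _).2 (Or.inr ⟨rfl, lt_add_one _⟩)
    · exact (lex_lt_iff _ _).2 (Or.inl h)
  · obtain ⟨q, hq1, hq2⟩ := exists_between h2
    exact ⟨toLex ((ofLex a).1, q), (lex_lt_iff _ _).2 (Or.inr ⟨rfl, hq1⟩),
      (lex_lt_iff _ _).2 (Or.inr ⟨h1, hq2⟩)⟩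

instance : NoMaxOrder OmegaOneQ :=
  ⟨fun a => ⟨toLex ((ofLex a).1, (ofLex a).2 + 1),
    (lex_lt_iff _ _).2 (Or.inr ⟨rfl, lt_add_one _⟩)⟩⟩

instance : NoMinOrder OmegaOneQ :=
  ⟨fun a => ⟨toLex ((ofLex a).1, (ofLex a).2 - 1),
    (lex_lt_iff _ _).2 (Or.inr ⟨rfl, sub_one_lt _⟩)⟩⟩

lemma countable_fstle (g : Om) : {w : OmegaOneQ | (ofLex w).1 ≤ g}.Countable := by
  have h2 : (Set.Iio g).Countable :=
    (Cardinal.countable_iff_lt_aleph_one _).2 (Cardinal.mk_Iio_ord_toType g)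
  have h1 : (Set.Iic g).Countable := by
    rw [← Set.Iio_union_right]
    exact h2.union (Set.countable_singleton g)
  have hset : {w : OmegaOneQ | (ofLex w).1 ≤ g} = ofLex ⁻¹' (Set.Iic g ×ˢ (Set.univ : Set ℚ)) := by
    ext w; simp [Set.mem_prod]
  rw [hset]
  exact (h1.prod Set.countable_univ).preimage (ofLex.injective)

lemma countable_Iic (m : OmegaOneQ) : (Set.Iic m).Countable := by
  refine (countable_fstle (ofLex m).1).mono fun w hw => ?_
  rcases (lex_le_iff w m).1 hw with h | ⟨h1, _⟩
  · exact le_of_lt h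
  · exact le_of_eq h1

lemma exists_above (x y : OmegaOneQ) :
    ∃ z : OmegaOneQ, x < z ∧ y < z ∧ (Set.Iio z).Countable := by
  obtain ⟨g1, h1⟩ := exists_gt (ofLex x).1
  obtain ⟨g2, h2⟩ := exists_gt (ofLex y).1
  refine ⟨toLex (max g1 g2, 0), ?_, ?_, ?_⟩
  · exact (lex_lt_iff _ _).2 (Or.inl (lt_of_lt_of_le h1 (le_max_left _ _)))
  · exact (lex_lt_iff _ _).2 (Or.inl (lt_of_lt_of_le h2 (le_max_right _ _)))
  · refine (countable_fstle (max g1 g2)).mono fun w hw => ?_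
    rcases (lex_lt_iff w _).1 hw with h | ⟨h1', _⟩
    · exact le_of_lt h
    · exact le_of_eq h1'

lemma not_countable_univ : ¬ (Set.univ : Set OmegaOneQ).Countable := by
  intro h
  have hinj : Function.Injective (fun g : Om => (toLex (g, (0 : ℚ)) : OmegaOneQ)) := by
    intro g1 g2 hgg
    have := congrArg (fun w : OmegaOneQ => (ofLex w).1) hgg
    simpa using this
  have h2 : Cardinal.mk OmegaOneQ ≤ Cardinal.aleph0 := by
    rw [← Cardinal.mk_univ]
    exact Cardinal.le_aleph0_iff_set_countable.2 h
  have h3 : Cardinal.aleph 1 ≤ Cardinal.mk OmegaOneQ := by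
    rw [← Cardinal.mk_ord_toType (Cardinal.aleph 1)]
    exact Cardinal.mk_le_of_injective hinj
  exact absurd (h3.trans h2) (not_le.2 Cardinal.aleph0_lt_aleph_one)

/-- Extend an order automorphism of an open interval by the identity. -/
lemma extend_orderIso {α : Type*} [LinearOrder α] {m z : α}
    (g : (Set.Ioo m z) ≃o (Set.Ioo m z)) :
    ∃ F : α ≃o α, (∀ w (h : w ∈ Set.Ioo m z), F w = (g ⟨w, h⟩ : α)) ∧
      ∀ w, w ∉ Set.Ioo m z → F w = w := by
  classical
  set f : α → α := fun w => if h : w ∈ Set.Ioo m z then (g ⟨w, h⟩ : α) else w with hf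
  have hval : ∀ w (h : w ∈ Set.Ioo m z), f w = (g ⟨w, h⟩ : α) := fun w h => dif_pos h
  have hval' : ∀ w, w ∉ Set.Ioo m z → f w = w := fun w h => dif_neg h
  have hmono : StrictMono f := by
    intro w1 w2 hlt
    by_cases h1 : w1 ∈ Set.Ioo m z <;> by_cases h2 : w2 ∈ Set.Ioo m z
    · rw [hval w1 h1, hval w2 h2]
      exact Subtype.coe_lt_coe.2 (g.lt_iff_lt.2 (Subtype.mk_lt_mk.2 hlt))
    · rw [hval w1 h1, hval' w2 h2]
      have hz : z ≤ w2 := not_lt.1 fun hc => h2 ⟨h1.1.trans hlt, hc⟩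
      exact lt_of_lt_of_le (g ⟨w1, h1⟩).2.2 hz
    · rw [hval' w1 h1, hval w2 h2]
      have hm : w1 ≤ m := not_lt.1 fun hc => h1 ⟨hc, hlt.trans h2.2⟩
      exact lt_of_le_of_lt hm (g ⟨w2, h2⟩).2.1
    · rw [hval' w1 h1, hval' w2 h2]; exact hlt
  have hsurj : Function.Surjective f := by
    intro w
    by_cases h : w ∈ Set.Ioo m z
    · refine ⟨(g.symm ⟨w, h⟩ : α), ?_⟩
      rw [hval _ (g.symm ⟨w, h⟩).2]
      rw [Subtype.coe_eta, OrderIso.apply_symm_apply]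
    · exact ⟨w, hval' w h⟩
  refine ⟨StrictMono.orderIsoOfSurjective f hmono hsurj, fun w h => ?_, fun w h => ?_⟩
  · show f w = _; exact hval w h
  · show f w = _; exact hval' w h

/-- In a countable dense linear order without endpoints, any point can be moved to
any other point by an automorphism. -/
lemma dlo_auto {b : Type*} [LinearOrder b] [Countable b] [DenselyOrdered b]
    [NoMinOrder b] [NoMaxOrder b] [Nonempty b] (x y : b) : ∃ g : b ≃o b, g x = y := by
  obtain ⟨j⟩ := Order.iso_of_countable_dense b ℚ
  refine ⟨(j.trans (OrderIso.addRight (j y - j x))).trans j.symm, ?_⟩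
  have h1 : ((j.trans (OrderIso.addRight (j y - j x))).trans j.symm) x
      = j.symm (j x + (j y - j x)) := rfl
  rw [h1]
  have h2 : j x + (j y - j x) = j y := by ring
  rw [h2, OrderIso.symm_apply_apply]

lemma exists_move {m x y : OmegaOneQ} (hx : m < x) (hy : m < y) :
    ∃ F : OmegaOneQ ≃o OmegaOneQ, F x = y ∧ ∀ w, w ≤ m → F w = w := by
  obtain ⟨z, hxz, hyz, hz⟩ := exists_above x y
  haveI hcnt : Countable (Set.Ioo m z) :=
    ((hz.mono Set.Ioo_subset_Iio_self).to_subtype)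
  haveI hne : Nonempty (Set.Ioo m z) := Set.nonempty_Ioo_subtype (hx.trans hxz)
  obtain ⟨g, hg⟩ := dlo_auto (⟨x, hx, hxz⟩ : Set.Ioo m z) ⟨y, hy, hyz⟩
  obtain ⟨F, hF1, hF2⟩ := extend_orderIso g
  refine ⟨F, ?_, fun w hw => hF2 w fun hc => absurd hc.1 (not_lt.2 hw)⟩
  rw [hF1 x ⟨hx, hxz⟩, hg]

instance : FirstOrder.Language.order.OrderedStructure OmegaOneQ := ⟨fun _ => Iff.rfl⟩

/-- Orbit lemma: two points above a bound `m` dominating all parameters satisfy the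
same formulas over those parameters. -/
lemma orbit {k : ℕ} (φ : FirstOrder.Language.order.Formula (Fin (k + 1)))
    (c : Fin k → OmegaOneQ) (m x y : OmegaOneQ)
    (hc : ∀ i, c i ≤ m) (hx : m < x) (hy : m < y) :
    φ.Realize (Fin.cons x c) ↔ φ.Realize (Fin.cons y c) := by
  obtain ⟨F, hFx, hFfix⟩ := exists_move hx hy
  have hcomp : (F : OmegaOneQ → OmegaOneQ) ∘ (Fin.cons x c) = Fin.cons y c := by
    funext i
    refine Fin.cases ?_ (fun j => ?_) i
    · simpa using hFx
    · simpa using hFfix (c j) (hc j)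
  calc φ.Realize (Fin.cons x c)
      ↔ φ.Realize ((F : OmegaOneQ → OmegaOneQ) ∘ (Fin.cons x c)) :=
        (FirstOrder.Language.StrongHomClass.realize_formula F φ).symm
    _ ↔ φ.Realize (Fin.cons y c) := by rw [hcomp]

/-- The `≤` formula in two variables. -/
noncomputable def leFml : FirstOrder.Language.order.Formula (Fin 2) :=
  FirstOrder.Language.Term.le
    (FirstOrder.Language.var (Sum.inl 0)) (FirstOrder.Language.var (Sum.inl 1))

lemma leFml_realize (v : Fin 2 → OmegaOneQ) : leFml.Realize v ↔ v 0 ≤ v 1 := by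
  simp [leFml, FirstOrder.Language.Formula.Realize]

lemma clp_empty : clp FirstOrder.Language.order OmegaOneQ ∅ = ∅ := by
  ext x
  simp only [Set.mem_empty_iff_false, iff_false]
  rintro ⟨n, φ, c, hc, hcount, hx⟩
  have huniv : Set.univ ⊆ solSet FirstOrder.Language.order OmegaOneQ φ c := by
    intro y _
    obtain ⟨m1, hm1⟩ := exists_lt x
    obtain ⟨m2, hm2⟩ := exists_lt y
    have horb := orbit φ c (min m1 m2) x y (fun i => (hc i).elim)
      (lt_of_le_of_lt (min_le_left _ _) hm1) (lt_of_le_of_lt (min_le_right _ _) hm2)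
    exact horb.mp hx
  exact not_countable_univ (hcount.mono huniv)

end Aux

/-- `ω₁ ×ₗ ℚ` is quasiminimal, but the quasiminimal closure `cl_p` fails
the exchange property, hence is not a pregeometry. -/
theorem omegaOneQ_quasiminimal_not_exchange :
    Quasiminimal FirstOrder.Language.order OmegaOneQ ∧
    ¬ (∀ (A : Set OmegaOneQ) (a b : OmegaOneQ),
        a ∈ clp FirstOrder.Language.order OmegaOneQ (insert b A) →
        a ∉ clp FirstOrder.Language.order OmegaOneQ A →
        b ∈ clp FirstOrder.Language.order OmegaOneQ (insert a A)) := by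
  constructor
  · intro n φ b
    obtain ⟨m, hm⟩ := Finite.exists_le b
    by_cases hS : ∃ x, m < x ∧ x ∈ solSet FirstOrder.Language.order OmegaOneQ φ b
    · obtain ⟨x, hmx, hx⟩ := hS
      right
      refine (countable_Iic m).mono fun w hw => ?_
      by_contra hwm
      exact hw ((orbit φ b m x w hm hmx (not_le.1 hwm)).mp hx)
    · left
      refine (countable_Iic m).mono fun w hw => ?_
      by_contra hwm
      exact hS ⟨w, not_le.1 hwm, hw⟩
  · intro hexch
    have b0 : OmegaOneQ := Classical.arbitrary _
    obtain ⟨a0, ha0⟩ := exists_lt b0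
    have h1 : a0 ∈ clp FirstOrder.Language.order OmegaOneQ (insert b0 ∅) := by
      refine ⟨1, leFml, ![b0], fun i => by fin_cases i <;> simp, ?_, ?_⟩
      · refine (countable_Iic b0).mono fun w hw => ?_
        have := (leFml_realize (Fin.cons w ![b0])).1 hw
        simpa using this
      · show leFml.Realize (Fin.cons a0 ![b0])
        rw [leFml_realize]
        simpa using ha0.le
    have h2 : a0 ∉ clp FirstOrder.Language.order OmegaOneQ ∅ := by
      rw [clp_empty]; exact Set.notMem_empty a0
    obtain ⟨n, φ, c, hc, hcount, hb⟩ := hexch ∅ a0 b0 h1 h2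
    have hc' : ∀ i, c i ≤ a0 := by
      intro i
      have := hc i
      simp only [Set.mem_insert_iff, Set.mem_empty_iff_false, or_false] at this
      exact this.le
    have hsub : Set.Ioi a0 ⊆ solSet FirstOrder.Language.order OmegaOneQ φ c := by
      intro y hy
      exact (orbit φ c a0 b0 y hc' ha0 hy).mp hb
    have huniv : (Set.univ : Set OmegaOneQ).Countable := by
      have : (Set.univ : Set OmegaOneQ) ⊆ Set.Iic a0 ∪ Set.Ioi a0 := by
        intro w _
        rcases le_or_gt w a0 with h | h
        · exact Or.inl h
        · exact Or.inr h
      exact Set.Countable.mono this ((countable_Iic a0).union (hcount.mono hsub))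
    exact not_countable_univ huniv



end QM
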